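/- Let 0<s<1, 1<p<∞, and let G ⊂ ℝⁿ be a proper domain. For every f ∈ W^{s,p}(G), the zero extension E₀f (equal to f on G and 0 outside G) satisfies ‖E₀f‖_{W^{s,p}(ℝⁿ)} ≤ C ( ‖f‖_{W^{s,p}(G)} + (∫_G |f(x)|^p dist(x,∂G)^{−sp} dx)^{1/p} ), with C depending only on n, s, p. -/

import Mathlib

open MeasureTheory Metric Set
open scoped ENNReal

noncomputable section

/-- The `p`-th power `L^p` integral of `f` over `A`. -/
def lpInt (n : ℕ) (p : ℝ) (A : Set (EuclideanSpace ℝ (Fin n)))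
    (f : EuclideanSpace ℝ (Fin n) → ℝ) : ℝ≥0∞ :=
  ∫⁻ x in A, ENNReal.ofReal (|f x| ^ p)

/-- The `p`-th power of the Gagliardo seminorm of `f` over `A`. -/
def gagliardo (n : ℕ) (s p : ℝ) (A : Set (EuclideanSpace ℝ (Fin n)))
    (f : EuclideanSpace ℝ (Fin n) → ℝ) : ℝ≥0∞ :=
  ∫⁻ x in A, ∫⁻ y in A, ENNReal.ofReal (|f x - f y| ^ p / ‖x - y‖ ^ ((n : ℝ) + s * p))

/-- The `W^{s,p}(A)` norm of `f`. -/
def sobNorm (n : ℕ) (s p : ℝ) (A : Set (EuclideanSpace ℝ (Fin n)))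
    (f : EuclideanSpace ℝ (Fin n) → ℝ) : ℝ≥0∞ :=
  (lpInt n p A f) ^ (1 / p) + (gagliardo n s p A f) ^ (1 / p)

/-! ### Auxiliary material -/

/-- The Gagliardo kernel. -/
def Wker (n : ℕ) (s p : ℝ) (u : EuclideanSpace ℝ (Fin n) → ℝ)
    (x y : EuclideanSpace ℝ (Fin n)) : ℝ≥0∞ :=
  ENNReal.ofReal (|u x - u y| ^ p / ‖x - y‖ ^ ((n : ℝ) + s * p))

lemma gagliardo_eq (n : ℕ) (s p : ℝ) (A : Set (EuclideanSpace ℝ (Fin n)))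
    (u : EuclideanSpace ℝ (Fin n) → ℝ) :
    gagliardo n s p A u = ∫⁻ x in A, ∫⁻ y in A, Wker n s p u x y := rfl

/-- The normalizing constant: integral of `‖w‖^(-α)` outside the unit ball. -/
def c0 (n : ℕ) (α : ℝ) : ℝ≥0∞ :=
  ∫⁻ w : EuclideanSpace ℝ (Fin n), ((Metric.ball (0 : EuclideanSpace ℝ (Fin n)) 1)ᶜ).indicator
    (fun w => ENNReal.ofReal (‖w‖ ^ (-α))) w

lemma c0_lt_top {n : ℕ} {α : ℝ} (hα : (n : ℝ) < α) : c0 n α < ⊤ := by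
  have hα0 : 0 ≤ α := le_trans (Nat.cast_nonneg n) hα.le
  have hb : ∀ w : EuclideanSpace ℝ (Fin n),
      ((Metric.ball (0 : EuclideanSpace ℝ (Fin n)) 1)ᶜ).indicator
        (fun w => ENNReal.ofReal (‖w‖ ^ (-α))) w
      ≤ ENNReal.ofReal ((2:ℝ) ^ α) * ENNReal.ofReal ((1 + ‖w‖) ^ (-α)) := by
    intro w
    by_cases hw : w ∈ (Metric.ball (0 : EuclideanSpace ℝ (Fin n)) 1)ᶜ
    · rw [Set.indicator_of_mem hw]
      have h1 : (1:ℝ) ≤ ‖w‖ := by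
        simpa [Metric.mem_ball, dist_eq_norm, not_lt] using hw
      have hhalf : (0:ℝ) < (1 + ‖w‖) / 2 := by linarith
      have hle : (1 + ‖w‖) / 2 ≤ ‖w‖ := by linarith
      have h2 : ‖w‖ ^ (-α) ≤ ((1 + ‖w‖) / 2) ^ (-α) :=
        Real.rpow_le_rpow_of_nonpos hhalf hle (neg_nonpos.mpr hα0)
      have heq : ((1 + ‖w‖) / 2) ^ (-α) = 2 ^ α * (1 + ‖w‖) ^ (-α) := by
        rw [Real.div_rpow (by linarith : (0:ℝ) ≤ 1 + ‖w‖) (by norm_num : (0:ℝ) ≤ 2),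
          Real.rpow_neg (by norm_num : (0:ℝ) ≤ 2), div_eq_mul_inv, inv_inv, mul_comm]
      calc ENNReal.ofReal (‖w‖ ^ (-α)) ≤ ENNReal.ofReal (((1 + ‖w‖) / 2) ^ (-α)) :=
            ENNReal.ofReal_le_ofReal h2
        _ = ENNReal.ofReal ((2:ℝ) ^ α * (1 + ‖w‖) ^ (-α)) := by rw [heq]
        _ = ENNReal.ofReal ((2:ℝ) ^ α) * ENNReal.ofReal ((1 + ‖w‖) ^ (-α)) :=
            ENNReal.ofReal_mul (Real.rpow_nonneg (by norm_num) _)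
    · rw [Set.indicator_of_notMem hw]; exact zero_le
  calc c0 n α ≤ ∫⁻ w : EuclideanSpace ℝ (Fin n),
        ENNReal.ofReal ((2:ℝ) ^ α) * ENNReal.ofReal ((1 + ‖w‖) ^ (-α)) := lintegral_mono hb
    _ = ENNReal.ofReal ((2:ℝ) ^ α) * ∫⁻ w : EuclideanSpace ℝ (Fin n),
        ENNReal.ofReal ((1 + ‖w‖) ^ (-α)) := lintegral_const_mul' _ _ ENNReal.ofReal_ne_top
    _ < ⊤ := by
        apply ENNReal.mul_lt_top ENNReal.ofReal_lt_top
        apply finite_integral_one_add_norm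
        rwa [finrank_euclideanSpace_fin]

lemma shift_int {n : ℕ} (α : ℝ) (x : EuclideanSpace ℝ (Fin n)) (r : ℝ) :
    ∫⁻ y in (Metric.ball x r)ᶜ, ENNReal.ofReal (‖x - y‖ ^ (-α)) =
      ∫⁻ z in (Metric.ball (0 : EuclideanSpace ℝ (Fin n)) r)ᶜ,
        ENNReal.ofReal (‖z‖ ^ (-α)) := by
  rw [← lintegral_indicator measurableSet_ball.compl,
    ← lintegral_indicator measurableSet_ball.compl]
  have key := lintegral_add_right_eq_self
    (μ := (volume : Measure (EuclideanSpace ℝ (Fin n))))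
    (fun y => ((Metric.ball x r)ᶜ).indicator (fun y => ENNReal.ofReal (‖x - y‖ ^ (-α))) y) x
  rw [← key]
  refine lintegral_congr fun z => ?_
  have hmem : (z + x ∈ (Metric.ball x r)ᶜ) ↔
      (z ∈ (Metric.ball (0 : EuclideanSpace ℝ (Fin n)) r)ᶜ) := by
    simp [Metric.mem_ball, dist_eq_norm, add_sub_cancel_right]
  have hval : ‖x - (z + x)‖ = ‖z‖ := by
    rw [show x - (z + x) = -z by abel, norm_neg]
  rcases em (z ∈ (Metric.ball (0 : EuclideanSpace ℝ (Fin n)) r)ᶜ) with h | h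
  · rw [Set.indicator_of_mem (hmem.mpr h), Set.indicator_of_mem h, hval]
  · rw [Set.indicator_of_notMem (fun hc => h (hmem.mp hc)), Set.indicator_of_notMem h]

lemma scale_int {n : ℕ} (α : ℝ) {r : ℝ} (hr : 0 < r) :
    ∫⁻ z in (Metric.ball (0 : EuclideanSpace ℝ (Fin n)) r)ᶜ,
        ENNReal.ofReal (‖z‖ ^ (-α)) =
      ENNReal.ofReal (r ^ ((n : ℝ) - α)) * c0 n α := by
  set F : EuclideanSpace ℝ (Fin n) → ℝ≥0∞ :=
    ((Metric.ball (0 : EuclideanSpace ℝ (Fin n)) r)ᶜ).indicator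
      (fun z => ENNReal.ofReal (‖z‖ ^ (-α))) with hFdef
  have hF : Measurable F := Measurable.indicator (by fun_prop) measurableSet_ball.compl
  have h1 : ∫⁻ z, F z ∂(Measure.map (fun w : EuclideanSpace ℝ (Fin n) => r • w) volume)
      = ∫⁻ w, F (r • w) := lintegral_map hF (continuous_const_smul r).measurable
  rw [Measure.map_addHaar_smul volume hr.ne', lintegral_smul_measure, smul_eq_mul] at h1
  have hdim : (r : ℝ) ^ Module.finrank ℝ (EuclideanSpace ℝ (Fin n)) = r ^ ((n : ℝ)) := by
    rw [finrank_euclideanSpace_fin, Real.rpow_natCast]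
  have hrn : (0:ℝ) < r ^ ((n : ℝ)) := Real.rpow_pos_of_pos hr _
  -- value of F (r • w)
  have hFs : ∀ w : EuclideanSpace ℝ (Fin n), F (r • w) = ENNReal.ofReal (r ^ (-α)) *
      ((Metric.ball (0 : EuclideanSpace ℝ (Fin n)) 1)ᶜ).indicator
        (fun w => ENNReal.ofReal (‖w‖ ^ (-α))) w := by
    intro w
    have hnorm : ‖r • w‖ = r * ‖w‖ := by
      rw [norm_smul, Real.norm_eq_abs, abs_of_pos hr]
    have hmem : (r • w ∈ (Metric.ball (0 : EuclideanSpace ℝ (Fin n)) r)ᶜ) ↔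
        (w ∈ (Metric.ball (0 : EuclideanSpace ℝ (Fin n)) 1)ᶜ) := by
      simp only [Set.mem_compl_iff, Metric.mem_ball, dist_zero_right, hnorm, not_iff_not]
      constructor
      · intro h; nlinarith
      · intro h; nlinarith
    rcases em (w ∈ (Metric.ball (0 : EuclideanSpace ℝ (Fin n)) 1)ᶜ) with h | h
    · rw [hFdef, Set.indicator_of_mem (hmem.mpr h), Set.indicator_of_mem h, hnorm,
        Real.mul_rpow hr.le (norm_nonneg _),
        ENNReal.ofReal_mul (Real.rpow_nonneg hr.le _)]
    · rw [hFdef, Set.indicator_of_notMem (fun hc => h (hmem.mp hc)),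
        Set.indicator_of_notMem h, mul_zero]
  have h2 : ∫⁻ w, F (r • w) = ENNReal.ofReal (r ^ (-α)) * c0 n α := by
    calc ∫⁻ w, F (r • w) = ∫⁻ w, ENNReal.ofReal (r ^ (-α)) *
        ((Metric.ball (0 : EuclideanSpace ℝ (Fin n)) 1)ᶜ).indicator
          (fun w => ENNReal.ofReal (‖w‖ ^ (-α))) w := lintegral_congr hFs
      _ = _ := lintegral_const_mul' _ _ ENNReal.ofReal_ne_top
  -- combine
  have h3 : (∫⁻ z, F z) = ENNReal.ofReal (r ^ ((n : ℝ))) * ∫⁻ w, F (r • w) := by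
    rw [← h1, ← mul_assoc, hdim, ← ENNReal.ofReal_mul hrn.le]
    rw [abs_of_pos (inv_pos.mpr hrn), mul_inv_cancel₀ hrn.ne', ENNReal.ofReal_one, one_mul]
  rw [← lintegral_indicator measurableSet_ball.compl, ← hFdef, h3, h2, ← mul_assoc,
    ← ENNReal.ofReal_mul hrn.le, ← Real.rpow_add hr, ← sub_eq_add_neg]

lemma inner_bound {n : ℕ} {s p : ℝ} (hsp : 0 < s * p)
    {G : Set (EuclideanSpace ℝ (Fin n))} (hGo : IsOpen G) (hGu : G ≠ Set.univ)
    {x : EuclideanSpace ℝ (Fin n)} (hx : x ∈ G) :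
    ∫⁻ y in Gᶜ, ENNReal.ofReal (‖x - y‖ ^ (-((n : ℝ) + s * p))) ≤
      (ENNReal.ofReal (infDist x (frontier G))) ^ (-(s * p)) * c0 n ((n : ℝ) + s * p) := by
  have hGc : IsClosed Gᶜ := hGo.isClosed_compl
  have hne : Gᶜ.Nonempty := Set.nonempty_compl.mpr hGu
  have hd : 0 < infDist x Gᶜ :=
    (hGc.notMem_iff_infDist_pos hne).1 (fun h => h hx)
  obtain ⟨y₀, hy₀, hdy⟩ := exists_mem_frontier_infDist_compl_eq_dist hx hGu
  have hfr : infDist x (frontier G) = infDist x Gᶜ := by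
    apply le_antisymm
    · rw [hdy]; exact infDist_le_dist_of_mem hy₀
    · refine infDist_le_infDist_of_subset ?_ ⟨y₀, hy₀⟩
      rw [hGo.frontier_eq]; exact fun z hz => hz.2
  have hsub : Gᶜ ⊆ (Metric.ball x (infDist x Gᶜ))ᶜ := by
    intro y hy hmem
    have h1 : infDist x Gᶜ ≤ dist x y := infDist_le_dist_of_mem hy
    rw [Metric.mem_ball, dist_comm] at hmem
    exact absurd hmem (not_lt.mpr h1)
  calc ∫⁻ y in Gᶜ, ENNReal.ofReal (‖x - y‖ ^ (-((n : ℝ) + s * p)))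
      ≤ ∫⁻ y in (Metric.ball x (infDist x Gᶜ))ᶜ,
        ENNReal.ofReal (‖x - y‖ ^ (-((n : ℝ) + s * p))) := lintegral_mono_set hsub
    _ = ∫⁻ z in (Metric.ball (0 : EuclideanSpace ℝ (Fin n)) (infDist x Gᶜ))ᶜ,
        ENNReal.ofReal (‖z‖ ^ (-((n : ℝ) + s * p))) := shift_int _ x _
    _ = ENNReal.ofReal ((infDist x Gᶜ) ^ ((n : ℝ) - ((n : ℝ) + s * p))) *
        c0 n ((n : ℝ) + s * p) := scale_int _ hd
    _ = (ENNReal.ofReal (infDist x (frontier G))) ^ (-(s * p)) * c0 n ((n : ℝ) + s * p) := by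
        rw [hfr, show (n : ℝ) - ((n : ℝ) + s * p) = -(s * p) by ring,
          ENNReal.ofReal_rpow_of_pos hd]

theorem stmt1 (n : ℕ) (s p : ℝ) (hs0 : 0 < s) (hs1 : s < 1) (hp : 1 < p) :
    ∃ C : ℝ, 0 < C ∧
      ∀ G : Set (EuclideanSpace ℝ (Fin n)), IsOpen G → IsConnected G → G ≠ Set.univ →
        ∀ f : EuclideanSpace ℝ (Fin n) → ℝ, Measurable f →
          lpInt n p G f < ⊤ → gagliardo n s p G f < ⊤ →
          sobNorm n s p Set.univ (G.indicator f) ≤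
            ENNReal.ofReal C *
              (sobNorm n s p G f +
                (∫⁻ x in G, ENNReal.ofReal (|f x| ^ p) *
                  (ENNReal.ofReal (infDist x (frontier G))) ^ (-(s * p))) ^ (1 / p)) := by
  have hp0 : (0:ℝ) < p := lt_trans one_pos hp
  have hsp : 0 < s * p := mul_pos hs0 hp0
  have hα : (n:ℝ) < (n:ℝ) + s * p := by linarith
  have hc0 : c0 n ((n:ℝ) + s * p) < ⊤ := c0_lt_top hα
  set B : ℝ≥0∞ := (2 * c0 n ((n:ℝ) + s * p)) ^ (1/p) with hB
  have hBne : B ≠ ⊤ :=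
    ENNReal.rpow_ne_top_of_nonneg (by positivity) (ENNReal.mul_ne_top (by norm_num) hc0.ne)
  refine ⟨B.toReal + 1, by positivity, ?_⟩
  intro G hGo _hGc hGu f hf _hI _hJ
  have hGm : MeasurableSet G := hGo.measurableSet
  have hum : Measurable (G.indicator f) := hf.indicator hGm
  have hWm : Measurable (Function.uncurry (Wker n s p (G.indicator f))) := by
    unfold Function.uncurry Wker; fun_prop
  set K : ℝ≥0∞ := ∫⁻ x in G, ENNReal.ofReal (|f x| ^ p) *
    (ENNReal.ofReal (infDist x (frontier G))) ^ (-(s * p)) with hK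
  -- L^p part
  have hIeq : lpInt n p Set.univ (G.indicator f) = lpInt n p G f := by
    unfold lpInt
    rw [Measure.restrict_univ,
      ← lintegral_add_compl (fun x => ENNReal.ofReal (|G.indicator f x| ^ p)) hGm]
    have h2 : ∫⁻ x in Gᶜ, ENNReal.ofReal (|G.indicator f x| ^ p) = 0 := by
      rw [setLIntegral_congr_fun_ae hGm.compl (ae_of_all _ fun x hx => ?_), lintegral_zero]
      rw [Set.indicator_of_notMem hx, abs_zero, Real.zero_rpow hp0.ne', ENNReal.ofReal_zero]
    have h1 : ∫⁻ x in G, ENNReal.ofReal (|G.indicator f x| ^ p) =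
        ∫⁻ x in G, ENNReal.ofReal (|f x| ^ p) :=
      setLIntegral_congr_fun_ae hGm (ae_of_all _ fun x hx => by
        rw [Set.indicator_of_mem hx])
    rw [h1, h2, add_zero]
  -- cross term bound
  have hcross : ∀ x ∈ G, ∫⁻ y in Gᶜ, Wker n s p (G.indicator f) x y ≤
      ENNReal.ofReal (|f x| ^ p) *
        ((ENNReal.ofReal (infDist x (frontier G))) ^ (-(s * p)) * c0 n ((n:ℝ) + s * p)) := by
    intro x hx
    have h1 : ∫⁻ y in Gᶜ, Wker n s p (G.indicator f) x y =
        ∫⁻ y in Gᶜ, ENNReal.ofReal (|f x| ^ p) *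
          ENNReal.ofReal (‖x - y‖ ^ (-((n:ℝ) + s * p))) := by
      refine setLIntegral_congr_fun_ae hGm.compl (ae_of_all _ fun y hy => ?_)
      unfold Wker
      rw [Set.indicator_of_mem hx, Set.indicator_of_notMem hy, sub_zero,
        div_eq_mul_inv, ← Real.rpow_neg (norm_nonneg _),
        ENNReal.ofReal_mul (Real.rpow_nonneg (abs_nonneg _) _)]
    rw [h1, lintegral_const_mul' _ _ ENNReal.ofReal_ne_top]
    exact mul_le_mul_right (inner_bound hsp hGo hGu hx) _
  have hT2 : ∫⁻ x in G, ∫⁻ y in Gᶜ, Wker n s p (G.indicator f) x y ≤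
      K * c0 n ((n:ℝ) + s * p) := by
    calc ∫⁻ x in G, ∫⁻ y in Gᶜ, Wker n s p (G.indicator f) x y
        ≤ ∫⁻ x in G, ENNReal.ofReal (|f x| ^ p) *
            ((ENNReal.ofReal (infDist x (frontier G))) ^ (-(s * p)) *
              c0 n ((n:ℝ) + s * p)) := setLIntegral_mono' hGm hcross
      _ = ∫⁻ x in G, (ENNReal.ofReal (|f x| ^ p) *
            (ENNReal.ofReal (infDist x (frontier G))) ^ (-(s * p))) *
              c0 n ((n:ℝ) + s * p) := by simp_rw [mul_assoc]
      _ = K * c0 n ((n:ℝ) + s * p) := lintegral_mul_const' _ _ hc0.ne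
  have hWsymm : ∀ x y, Wker n s p (G.indicator f) x y = Wker n s p (G.indicator f) y x := by
    intro x y; unfold Wker; rw [abs_sub_comm, norm_sub_rev]
  have hT3 : ∫⁻ x in Gᶜ, ∫⁻ y in G, Wker n s p (G.indicator f) x y ≤
      K * c0 n ((n:ℝ) + s * p) := by
    rw [lintegral_lintegral_swap hWm.aemeasurable]
    calc ∫⁻ y in G, ∫⁻ x in Gᶜ, Wker n s p (G.indicator f) x y
        = ∫⁻ y in G, ∫⁻ x in Gᶜ, Wker n s p (G.indicator f) y x :=
          lintegral_congr fun y => lintegral_congr fun x => hWsymm x y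
      _ ≤ K * c0 n ((n:ℝ) + s * p) := hT2
  have hT4 : ∫⁻ x in Gᶜ, ∫⁻ y in Gᶜ, Wker n s p (G.indicator f) x y = 0 := by
    have hz : ∀ x ∈ Gᶜ, ∫⁻ y in Gᶜ, Wker n s p (G.indicator f) x y = 0 := by
      intro x hx
      rw [setLIntegral_congr_fun_ae hGm.compl (ae_of_all _ fun y hy => ?_), lintegral_zero]
      unfold Wker
      rw [Set.indicator_of_notMem hx, Set.indicator_of_notMem hy, sub_zero, abs_zero,
        Real.zero_rpow hp0.ne', zero_div, ENNReal.ofReal_zero]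
    rw [setLIntegral_congr_fun_ae hGm.compl (ae_of_all _ hz), lintegral_zero]
  have hT1 : ∫⁻ x in G, ∫⁻ y in G, Wker n s p (G.indicator f) x y = gagliardo n s p G f := by
    rw [gagliardo_eq]
    refine setLIntegral_congr_fun_ae hGm (ae_of_all _ fun x hx => ?_)
    refine setLIntegral_congr_fun_ae hGm (ae_of_all _ fun y hy => ?_)
    unfold Wker
    rw [Set.indicator_of_mem hx, Set.indicator_of_mem hy]
  -- decomposition of the Gagliardo seminorm over ℝⁿ
  have hmeasIn : Measurable fun x => ∫⁻ y in G, Wker n s p (G.indicator f) x y :=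
    hWm.lintegral_prod_right
  have hdec : gagliardo n s p Set.univ (G.indicator f) ≤
      gagliardo n s p G f + 2 * c0 n ((n:ℝ) + s * p) * K := by
    rw [gagliardo_eq, Measure.restrict_univ]
    have hsplit : ∫⁻ x, ∫⁻ y, Wker n s p (G.indicator f) x y =
        ((∫⁻ x in G, ∫⁻ y in G, Wker n s p (G.indicator f) x y) +
          ∫⁻ x in Gᶜ, ∫⁻ y in G, Wker n s p (G.indicator f) x y) +
        ((∫⁻ x in G, ∫⁻ y in Gᶜ, Wker n s p (G.indicator f) x y) +
          ∫⁻ x in Gᶜ, ∫⁻ y in Gᶜ, Wker n s p (G.indicator f) x y) := by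
      calc ∫⁻ x, ∫⁻ y, Wker n s p (G.indicator f) x y
          = ∫⁻ x, ((∫⁻ y in G, Wker n s p (G.indicator f) x y) +
              ∫⁻ y in Gᶜ, Wker n s p (G.indicator f) x y) :=
            lintegral_congr fun x => (lintegral_add_compl _ hGm).symm
        _ = (∫⁻ x, ∫⁻ y in G, Wker n s p (G.indicator f) x y) +
            ∫⁻ x, ∫⁻ y in Gᶜ, Wker n s p (G.indicator f) x y :=
            lintegral_add_left hmeasIn _
        _ = _ := by
            rw [← lintegral_add_compl (fun x => ∫⁻ y in G, Wker n s p (G.indicator f) x y) hGm,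
              ← lintegral_add_compl (fun x => ∫⁻ y in Gᶜ, Wker n s p (G.indicator f) x y) hGm]
    rw [hsplit, hT1, hT4, add_zero]
    calc gagliardo n s p G f + (∫⁻ x in Gᶜ, ∫⁻ y in G, Wker n s p (G.indicator f) x y) +
          ∫⁻ x in G, ∫⁻ y in Gᶜ, Wker n s p (G.indicator f) x y
        ≤ gagliardo n s p G f + K * c0 n ((n:ℝ) + s * p) + K * c0 n ((n:ℝ) + s * p) :=
          add_le_add (add_le_add_right hT3 _) hT2
      _ = gagliardo n s p G f + 2 * c0 n ((n:ℝ) + s * p) * K := by ring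
  -- final assembly
  have hexp0 : (0:ℝ) ≤ 1 / p := by positivity
  have hexp1 : 1 / p ≤ 1 := by rw [div_le_one hp0]; linarith
  have h1 : (gagliardo n s p Set.univ (G.indicator f)) ^ (1/p) ≤
      (gagliardo n s p G f) ^ (1/p) + B * K ^ (1/p) := by
    calc (gagliardo n s p Set.univ (G.indicator f)) ^ (1/p)
        ≤ (gagliardo n s p G f + 2 * c0 n ((n:ℝ) + s * p) * K) ^ (1/p) :=
          ENNReal.rpow_le_rpow hdec hexp0
      _ ≤ (gagliardo n s p G f) ^ (1/p) + (2 * c0 n ((n:ℝ) + s * p) * K) ^ (1/p) :=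
          ENNReal.rpow_add_le_add_rpow _ _ hexp0 hexp1
      _ = (gagliardo n s p G f) ^ (1/p) + B * K ^ (1/p) := by
          rw [ENNReal.mul_rpow_of_nonneg _ _ hexp0, hB]
  have hofC : ENNReal.ofReal (B.toReal + 1) = B + 1 := by
    rw [ENNReal.ofReal_add ENNReal.toReal_nonneg zero_le_one, ENNReal.ofReal_toReal hBne,
      ENNReal.ofReal_one]
  unfold sobNorm
  rw [hIeq, hofC]
  calc (lpInt n p G f) ^ (1/p) + (gagliardo n s p Set.univ (G.indicator f)) ^ (1/p)
      ≤ (lpInt n p G f) ^ (1/p) + ((gagliardo n s p G f) ^ (1/p) + B * K ^ (1/p)) :=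
        add_le_add_right h1 _
    _ = ((lpInt n p G f) ^ (1/p) + (gagliardo n s p G f) ^ (1/p)) + B * K ^ (1/p) :=
        (add_assoc _ _ _).symm
    _ ≤ (B + 1) * ((lpInt n p G f) ^ (1/p) + (gagliardo n s p G f) ^ (1/p)) +
        (B + 1) * K ^ (1/p) :=
        add_le_add (le_mul_of_one_le_left' le_add_self)
          (mul_le_mul_left le_self_add _)
    _ = (B + 1) * (((lpInt n p G f) ^ (1/p) + (gagliardo n s p G f) ^ (1/p)) + K ^ (1/p)) := by
        ring
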